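/- arXiv:2307.11867 — 2 statements merged into one kernel-verified Lean document; each statement's English description precedes it below -/
import Mathlib

section
/- Under the assumptions of the previous identity (ξ > 0, τ > 0, p + q ≥ 1), the increased fleet profit from joining a nonempty platoon satisfies F̂ - F ≥ ξτ/2 > 0; in particular, joining a nonempty predicted platoon always strictly increases the fleet's platooning profit. -/
theorem stmt_4 (ξ τ : ℝ) (hξ : 0 < ξ) (hτ : 0 < τ) (p q : ℕ) (hpq : 1 ≤ p + q) :
    ξ * τ / 2 ≤
      ξ * τ * (((p : ℝ) + q) / ((p : ℝ) + q + 1)) * ((p : ℝ) + 1) -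
        ξ * τ * ((((p : ℝ) + q - 1)) / ((p : ℝ) + q)) * (p : ℝ) ∧
    0 < ξ * τ * (((p : ℝ) + q) / ((p : ℝ) + q + 1)) * ((p : ℝ) + 1) -
        ξ * τ * ((((p : ℝ) + q - 1)) / ((p : ℝ) + q)) * (p : ℝ) := by
  have hs : (1 : ℝ) ≤ (p : ℝ) + q := by exact_mod_cast Nat.one_le_cast.mpr hpq
  have hs0 : (0 : ℝ) < (p : ℝ) + q := by linarith
  have hs1 : (0 : ℝ) < (p : ℝ) + q + 1 := by linarith
  have hp : (0 : ℝ) ≤ (p : ℝ) := Nat.cast_nonneg p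
  have hξτ : 0 < ξ * τ := mul_pos hξ hτ
  have key : ξ * τ / 2 ≤
      ξ * τ * (((p : ℝ) + q) / ((p : ℝ) + q + 1)) * ((p : ℝ) + 1) -
        ξ * τ * ((((p : ℝ) + q - 1)) / ((p : ℝ) + q)) * (p : ℝ) := by
    rw [div_le_iff₀ (by norm_num : (0:ℝ) < 2), ← sub_nonneg]
    have h : (ξ * τ * (((p : ℝ) + q) / ((p : ℝ) + q + 1)) * ((p : ℝ) + 1) -
        ξ * τ * ((((p : ℝ) + q - 1)) / ((p : ℝ) + q)) * (p : ℝ)) * 2 -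
        ξ * τ =
        ξ * τ * ((((p:ℝ)+q)^2 + p) * 2 - (((p:ℝ)+q) * (((p:ℝ)+q)+1))) /
          (((p:ℝ)+q) * (((p:ℝ)+q)+1)) := by
      field_simp
      ring
    rw [h]
    apply div_nonneg
    · apply mul_nonneg hξτ.le
      nlinarith
    · positivity
  refine ⟨key, lt_of_lt_of_le (by linarith) key⟩
end

section
/- Let D ⊂ ℝ be a finite set (predicted departure times of potential platoon partners), t ∈ ℝ an arrival time, B ≥ 0 a waiting budget, and τ ∈ ℝ. Let r : ℝ → ℝ satisfy r(w) = 0 for all w ∈ [0, B] with t + w ∉ D, and r(w) ≥ 0 for all w. Let J : ℝ → ℝ be monotonically nonincreasing. Define Q(w) = r(w) + J(t + w + τ) and the discrete decision set Dᵂ = {d - t | d ∈ D, 0 ≤ d - t ≤ B} ∪ {0}. Then sup over w ∈ [0, B] of Q(w) equals max over w ∈ Dᵂ of Q(w), and the supremum is attained at a point of Dᵂ. -/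
theorem stmt_9 (D : Set ℝ) (hD : D.Finite) (t B τ : ℝ) (hB : 0 ≤ B)
    (r J : ℝ → ℝ)
    (hr0 : ∀ w ∈ Set.Icc 0 B, t + w ∉ D → r w = 0)
    (hrnn : ∀ w, 0 ≤ r w)
    (hJ : Antitone J)
    (Q : ℝ → ℝ) (hQ : ∀ w, Q w = r w + J (t + w + τ))
    (DW : Set ℝ) (hDW : DW = {w | ∃ d ∈ D, w = d - t ∧ 0 ≤ w ∧ w ≤ B} ∪ {0}) :
    ∃ w ∈ DW, Q w = sSup (Q '' Set.Icc 0 B) ∧ ∀ w' ∈ Set.Icc 0 B, Q w' ≤ Q w := by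
  -- DW is finite
  have hDWfin : DW.Finite := by
    rw [hDW]
    refine Set.Finite.union ?_ (Set.finite_singleton 0)
    have : {w : ℝ | ∃ d ∈ D, w = d - t ∧ 0 ≤ w ∧ w ≤ B} ⊆ (fun d => d - t) '' D := by
      rintro w ⟨d, hd, hw, -⟩
      exact ⟨d, hd, hw.symm⟩
    exact (hD.image _).subset this
  have h0DW : (0 : ℝ) ∈ DW := by rw [hDW]; right; rfl
  have hDWsub : DW ⊆ Set.Icc 0 B := by
    rw [hDW]
    rintro w (⟨d, hd, hw, h0, h1⟩ | h)
    · exact ⟨h0, h1⟩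
    · simp at h; simp [h, hB]
  -- pick maximizer of Q on DW
  obtain ⟨w, hwDW, hwmax⟩ := Set.Finite.exists_maximalFor Q DW hDWfin ⟨0, h0DW⟩
  have hwmax' : ∀ w' ∈ DW, Q w' ≤ Q w := by
    intro w' hw'
    by_contra h
    push_neg at h
    have := hwmax hw' h.le
    linarith
  have hub : ∀ w' ∈ Set.Icc 0 B, Q w' ≤ Q w := by
    intro w' hw'
    by_cases hmem : t + w' ∈ D
    · apply hwmax' w'
      rw [hDW]
      left
      exact ⟨t + w', hmem, by ring, hw'.1, hw'.2⟩
    · have hr : r w' = 0 := hr0 w' hw' hmem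
      have hJ' : J (t + w' + τ) ≤ J (t + 0 + τ) := hJ (by linarith [hw'.1])
      have : Q w' ≤ Q 0 := by
        rw [hQ, hQ, hr]
        have := hrnn 0
        linarith
      exact this.trans (hwmax' 0 h0DW)
  refine ⟨w, hwDW, ?_, hub⟩
  have hwIcc : w ∈ Set.Icc 0 B := hDWsub hwDW
  apply le_antisymm
  · exact le_csSup ⟨Q w, by rintro x ⟨y, hy, rfl⟩; exact hub y hy⟩ ⟨w, hwIcc, rfl⟩
  · exact csSup_le ⟨Q w, w, hwIcc, rfl⟩ (by rintro x ⟨y, hy, rfl⟩; exact hub y hy)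
end
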